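/- Let m, n ≥ 1 and let M be an m × n matrix with integer entries. Then there exist k ≥ 1 and a k × m matrix S with integer entries such that for every unperforated partially ordered abelian group G satisfying the interpolation property, the solution set {X ∈ M_{1,m}(G⁺) | XM ≥ 0} equals {YS | Y ∈ M_{1,k}(G⁺)}, where G⁺ = {x ∈ G | 0 ≤ x}, the products XM and YS are computed using the ℤ-module structure of G, and matrix inequalities are entrywise. -/

import Mathlib

open Finset


section
variable {G : Type*} [AddCommGroup G] [PartialOrder G] [IsOrderedAddMonoid G]

/-- Riesz interpolation ⇒ two-piece decomposition. -/
lemma rd2 (h3 : ∀ a₀ a₁ b₀ b₁ : G, a₀ ≤ b₀ → a₀ ≤ b₁ → a₁ ≤ b₀ → a₁ ≤ b₁ →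
      ∃ x : G, a₀ ≤ x ∧ a₁ ≤ x ∧ x ≤ b₀ ∧ x ≤ b₁)
    {x y z : G} (hx : 0 ≤ x) (hy : 0 ≤ y) (hz : 0 ≤ z) (hzxy : z ≤ x + y) :
    ∃ u v : G, 0 ≤ u ∧ 0 ≤ v ∧ u ≤ x ∧ v ≤ y ∧ z = u + v := by
  obtain ⟨u, h0u, hzyu, huz, hux⟩ :=
    h3 0 (z - y) z x hz hx (sub_le_self z hy) (by simpa [sub_le_iff_le_add] using hzxy)
  exact ⟨u, z - u, h0u, by simpa using huz, hux, by rw [sub_le_iff_le_add, add_comm] at hzyu; simpa [sub_le_iff_le_add] using hzyu,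
    by abel⟩

/-- Riesz decomposition over a finset. -/
lemma rdFinset (h3 : ∀ a₀ a₁ b₀ b₁ : G, a₀ ≤ b₀ → a₀ ≤ b₁ → a₁ ≤ b₀ → a₁ ≤ b₁ →
      ∃ x : G, a₀ ≤ x ∧ a₁ ≤ x ∧ x ≤ b₀ ∧ x ≤ b₁)
    {ι : Type*} [DecidableEq ι] (s : Finset ι) (c : ι → G) (hc : ∀ j ∈ s, 0 ≤ c j)
    (z : G) (h0 : 0 ≤ z) (hz : z ≤ ∑ j ∈ s, c j) :
    ∃ f : ι → G, (∀ j, 0 ≤ f j) ∧ (∀ j ∈ s, f j ≤ c j) ∧ (∀ j ∉ s, f j = 0) ∧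
      z = ∑ j ∈ s, f j := by
  induction s using Finset.induction generalizing z with
  | empty =>
    refine ⟨fun _ => 0, fun _ => le_refl _, by simp, by simp, ?_⟩
    simpa using le_antisymm (by simpa using hz) h0
  | @insert a s ha ih =>
    rw [Finset.sum_insert ha] at hz
    have hcs : 0 ≤ ∑ j ∈ s, c j :=
      Finset.sum_nonneg fun j hj => hc j (Finset.mem_insert_of_mem hj)
    obtain ⟨u, v, hu0, hv0, hua, hvs, huv⟩ :=
      rd2 h3 (hc a (Finset.mem_insert_self a s)) hcs h0 hz
    obtain ⟨f, hf0, hfle, hfout, hfsum⟩ :=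
      ih (fun j hj => hc j (Finset.mem_insert_of_mem hj)) v hv0 hvs
    refine ⟨Function.update f a u, ?_, ?_, ?_, ?_⟩
    · intro j
      rcases eq_or_ne j a with rfl | hj
      · simpa using hu0
      · simpa [Function.update_of_ne hj] using hf0 j
    · intro j hj
      rcases Finset.mem_insert.1 hj with rfl | hj'
      · simpa using hua
      · have : j ≠ a := by rintro rfl; exact ha hj'
        simpa [Function.update_of_ne this] using hfle j hj'
    · intro j hj
      have hja : j ≠ a := by rintro rfl; exact hj (Finset.mem_insert_self j s)
      have hjs : j ∉ s := fun h => hj (Finset.mem_insert_of_mem h)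
      simpa [Function.update_of_ne hja] using hfout j hjs
    · rw [Finset.sum_insert ha, Function.update_self]
      have : ∑ j ∈ s, Function.update f a u j = ∑ j ∈ s, f j := by
        refine Finset.sum_congr rfl fun j hj => ?_
        have : j ≠ a := by rintro rfl; exact ha hj
        exact Function.update_of_ne this u f
      rw [this, huv, hfsum]

end

section
variable {G : Type*} [AddCommGroup G] [PartialOrder G] [IsOrderedAddMonoid G]

/-- The conclusion: `x` is a positive combination of integer solutions of `v ⬝ u = 0`. -/
def HasDecomp {ι : Type} [Fintype ι] (v : ι → ℤ) (x : ι → G) : Prop :=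
  ∃ (l : ℕ) (u : Fin l → ι → ℕ) (c : Fin l → G),
    (∀ t, 0 ≤ c t) ∧ (∀ t, ∑ i, v i * (u t i : ℤ) = 0) ∧ (∀ i, x i = ∑ t, u t i • c t)

lemma hasDecomp_of {ι : Type} [Fintype ι] {v : ι → ℤ} {x : ι → G}
    (κ : Type) [Fintype κ] (u : κ → ι → ℕ) (c : κ → G)
    (hc : ∀ t, 0 ≤ c t) (hu : ∀ t, ∑ i, v i * (u t i : ℤ) = 0)
    (hx : ∀ i, x i = ∑ t, u t i • c t) : HasDecomp v x := by
  refine ⟨Fintype.card κ, fun t => u ((Fintype.equivFin κ).symm t),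
    fun t => c ((Fintype.equivFin κ).symm t), fun t => hc _, fun t => hu _, fun i => ?_⟩
  rw [hx i]
  exact (Equiv.sum_comp (Fintype.equivFin κ).symm (fun k => u k i • c k)).symm

/-- Trivial case: all coefficients vanish. -/
lemma hasDecomp_zero {ι : Type} [Fintype ι] [DecidableEq ι] {v : ι → ℤ} {x : ι → G}
    (hx : ∀ i, 0 ≤ x i) (hv : ∀ i, v i = 0) : HasDecomp v x := by
  refine hasDecomp_of ι (fun t i => if i = t then 1 else 0) x hx (fun t => by simp [hv]) ?_
  intro i
  rw [Finset.sum_eq_single i (fun t _ ht => by simp [Ne.symm ht]) (by simp)]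
  simp

/-- Zero-forcing case: all coefficients nonnegative. -/
lemma hasDecomp_of_nonneg
    (h2 : ∀ (p : ℕ) (x : G), 1 ≤ p → 0 ≤ p • x → 0 ≤ x)
    {ι : Type} [Fintype ι] [DecidableEq ι] {v : ι → ℤ} {x : ι → G}
    (hx : ∀ i, 0 ≤ x i) (heq : ∑ i, v i • x i = 0) (hv : ∀ i, 0 ≤ v i) :
    HasDecomp v x := by
  have hterm : ∀ i ∈ Finset.univ, (0:G) ≤ v i • x i :=
    fun i _ => zsmul_nonneg (hx i) (hv i)
  have hzero : ∀ i, v i ≠ 0 → x i = 0 := by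
    intro i hvi
    have h0 : v i • x i = 0 := (Finset.sum_eq_zero_iff_of_nonneg hterm).mp heq i (Finset.mem_univ i)
    have hn : (v i).toNat • x i = 0 := by
      rw [← natCast_zsmul, Int.toNat_of_nonneg (hv i)]; exact h0
    have h1n : 1 ≤ (v i).toNat := by have := hv i; omega
    have : 0 ≤ -x i := by
      apply h2 _ _ h1n
      rw [smul_neg, hn, neg_zero]
    exact le_antisymm (by simpa using this) (hx i)
  refine hasDecomp_of ι (fun t i => if i = t ∧ v t = 0 then 1 else 0) x hx (fun t => ?_) ?_
  · rcases eq_or_ne (v t) 0 with h | h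
    · rw [Finset.sum_eq_single t (fun i _ hi => by simp [hi]) (by simp)]
      simp [h]
    · apply Finset.sum_eq_zero
      intro i _
      simp [h]
  · intro i
    rcases eq_or_ne (v i) 0 with h | h
    · rw [Finset.sum_eq_single i (fun t _ ht => by simp [Ne.symm ht]) (by simp)]
      simp [h]
    · rw [hzero i h]
      apply (Finset.sum_eq_zero _).symm
      intro t _
      rcases eq_or_ne i t with rfl | ht
      · simp [h]
      · simp [ht]

end

section
variable {G : Type*} [AddCommGroup G] [PartialOrder G] [IsOrderedAddMonoid G]

lemma reduction_step
    (h2 : ∀ (p : ℕ) (x : G), 1 ≤ p → 0 ≤ p • x → 0 ≤ x)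
    (h3 : ∀ a₀ a₁ b₀ b₁ : G, a₀ ≤ b₀ → a₀ ≤ b₁ → a₁ ≤ b₀ → a₁ ≤ b₁ →
      ∃ x : G, a₀ ≤ x ∧ a₁ ≤ x ∧ x ≤ b₀ ∧ x ≤ b₁)
    {ι : Type} [Fintype ι] [DecidableEq ι] (M cnt : ℕ)
    (ih : ∀ (ι' : Type) [Fintype ι'] [DecidableEq ι'] (v' : ι' → ℤ) (x' : ι' → G),
      (∀ i, 0 ≤ x' i) → (∑ i, v' i • x' i = 0) → (∀ i, (v' i).natAbs ≤ M + 1) →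
      ((Finset.univ.filter fun i => (v' i).natAbs = M + 1).card ≤ cnt) → HasDecomp v' x')
    (v : ι → ℤ) (x : ι → G) (hx : ∀ i, 0 ≤ x i) (heq : ∑ i, v i • x i = 0)
    (hb : ∀ i, (v i).natAbs ≤ M + 1)
    (hcard : (Finset.univ.filter fun i => (v i).natAbs = M + 1).card ≤ cnt + 1)
    (i₀ : ι) (hi₀ : v i₀ = ((M : ℤ) + 1)) : HasDecomp v x := by
  by_cases hneg : ∃ j, v j < 0
  case neg =>
    push_neg at hneg
    exact hasDecomp_of_nonneg h2 hx heq hneg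
  set N : Finset ι := Finset.univ.filter (fun j => v j < 0) with hN
  have hvi₀pos : ¬ (v i₀ < 0) := by rw [hi₀]; omega
  have hi₀N : i₀ ∉ N := by simp [hN, hvi₀pos]
  -- Step 1: x i₀ ≤ ∑ j ∈ N, x j, via unperforation
  have key2 : x i₀ ≤ ∑ j ∈ N, x j := by
    have t1 : ((M : ℤ)+1) • x i₀ ≤ ∑ i ∈ Finset.univ.filter (fun i => 0 ≤ v i), v i • x i := by
      rw [← hi₀]
      refine Finset.single_le_sum
        (fun i hi => zsmul_nonneg (hx i) (Finset.mem_filter.mp hi).2) ?_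
      simp only [Finset.mem_filter, Finset.mem_univ, true_and, hi₀]
      omega
    have t2 : ∑ i ∈ Finset.univ.filter (fun i => 0 ≤ v i), v i • x i
        = ∑ j ∈ N, (-(v j)) • x j := by
      have hsplit := Finset.sum_filter_add_sum_filter_not Finset.univ
        (fun i => 0 ≤ v i) (fun i => v i • x i)
      rw [heq] at hsplit
      have hfe : Finset.univ.filter (fun i => ¬ 0 ≤ v i) = N := by
        apply Finset.filter_congr
        intro i _
        simp [not_le, hN]
      rw [hfe] at hsplit
      have h5 : ∑ i ∈ Finset.univ.filter (fun i => 0 ≤ v i), v i • x i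
          = - ∑ j ∈ N, v j • x j := eq_neg_of_add_eq_zero_left hsplit
      rw [h5, ← Finset.sum_neg_distrib]
      exact Finset.sum_congr rfl fun j _ => (neg_smul (v j) (x j)).symm
    have t3 : ∑ j ∈ N, (-(v j)) • x j ≤ ∑ j ∈ N, ((M : ℤ)+1) • x j := by
      refine Finset.sum_le_sum fun j hj => ?_
      have hvj : v j < 0 := by
        have := Finset.mem_filter.mp (hN ▸ hj)
        exact this.2
      have hle : (0:ℤ) ≤ ((M : ℤ)+1) - (-(v j)) := by have := hb j; omega
      have h6 := zsmul_nonneg (hx j) hle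
      rw [sub_smul] at h6
      exact sub_nonneg.mp h6
    have key : ((M : ℤ)+1) • x i₀ ≤ ((M : ℤ)+1) • ∑ j ∈ N, x j := by
      rw [Finset.smul_sum]
      exact t1.trans (le_of_le_of_eq (le_of_eq t2) rfl |>.trans t3)
    have h0 : 0 ≤ ((M : ℤ)+1) • (∑ j ∈ N, x j - x i₀) := by
      rw [smul_sub]
      exact sub_nonneg.mpr key
    have hcast : ((M : ℤ)+1) • (∑ j ∈ N, x j - x i₀) = (M+1 : ℕ) • (∑ j ∈ N, x j - x i₀) := by
      rw [← natCast_zsmul]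
      norm_num
    rw [hcast] at h0
    exact sub_nonneg.mp (h2 (M+1) _ (by omega) h0)
  -- Step 2: Riesz decomposition of x i₀ along N
  obtain ⟨f, hf0, hfleN, hfout, hfsum⟩ := rdFinset h3 N x (fun j _ => hx j) (x i₀) (hx i₀) key2
  have hfle : ∀ i, f i ≤ x i := by
    intro i
    by_cases hi : i ∈ N
    · exact hfleN i hi
    · rw [hfout i hi]; exact hx i
  have hfi₀ : f i₀ = 0 := hfout i₀ hi₀N
  have hsf : ∑ j, f j = x i₀ := by
    rw [← Finset.sum_subset (Finset.subset_univ N) (fun j _ hj => hfout j hj)]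
    exact hfsum.symm
  -- Step 3: the new system on ι ⊕ ι
  set vL : ι → ℤ := fun i => if i = i₀ then 0 else v i with hvL
  set vR : ι → ℤ := fun j => if v j < 0 then ((M : ℤ)+1) + v j else 0 with hvR
  set v' : ι ⊕ ι → ℤ := Sum.elim vL vR with hv'
  set x' : ι ⊕ ι → G := Sum.elim (fun i => x i - f i) f with hx'
  have hx'pos : ∀ k, 0 ≤ x' k := by
    rintro (i | j)
    · exact sub_nonneg.mpr (hfle i)
    · exact hf0 j
  have hfzero : ∀ j, ¬ (v j < 0) → f j = 0 := by
    intro j hj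
    exact hfout j (by simp [hN, hj])
  have heq' : ∑ k, v' k • x' k = 0 := by
    rw [Fintype.sum_sum_type]
    have hA : ∀ i, vL i • (x i - f i)
        = v i • x i - v i • f i - (if i = i₀ then ((M : ℤ)+1) • (x i - f i) else 0) := by
      intro i
      rcases eq_or_ne i i₀ with rfl | h
      · simp [hvL, hi₀, hfi₀]
      · simp [hvL, h, smul_sub]
    have hB : ∀ j, vR j • f j = ((M : ℤ)+1) • f j + v j • f j := by
      intro j
      by_cases hj : v j < 0
      · simp [hvR, hj, add_smul]
      · simp [hvR, hj, hfzero j hj]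
    simp only [hv', hx', Sum.elim_inl, Sum.elim_inr]
    rw [Finset.sum_congr rfl (fun i _ => hA i), Finset.sum_congr rfl (fun j _ => hB j)]
    rw [Finset.sum_sub_distrib, Finset.sum_sub_distrib, Finset.sum_add_distrib]
    rw [Finset.sum_ite_eq' Finset.univ i₀ (fun i => ((M : ℤ)+1) • (x i - f i))]
    rw [← Finset.smul_sum, hsf, heq, hfi₀]
    simp only [Finset.mem_univ, if_true, sub_zero]
    abel
  have hb' : ∀ k, (v' k).natAbs ≤ M + 1 := by
    rintro (i | j)
    · by_cases h : i = i₀ <;> simp only [hv', Sum.elim_inl, hvL, h, if_true, if_false,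
        Int.natAbs_zero] <;> first | omega | exact hb i
    · by_cases h : v j < 0 <;> simp only [hv', Sum.elim_inr, hvR, h, if_true, if_false,
        Int.natAbs_zero] <;> first | omega | (have := hb j; omega)
  have hi₀mem : i₀ ∈ Finset.univ.filter (fun i => (v i).natAbs = M + 1) := by
    simp [hi₀]
    omega
  have hcard' : (Finset.univ.filter fun k => (v' k).natAbs = M + 1).card ≤ cnt := by
    have hsub : (Finset.univ.filter fun k => (v' k).natAbs = M + 1)
        ⊆ ((Finset.univ.filter fun i => (v i).natAbs = M+1).erase i₀).map
            ⟨Sum.inl, Sum.inl_injective⟩ := by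
      rintro (i | j) hk
      · simp only [Finset.mem_filter, Finset.mem_univ, true_and, hv', Sum.elim_inl, hvL] at hk
        rcases eq_or_ne i i₀ with rfl | h
        · rw [if_pos rfl] at hk
          simp at hk
        · rw [if_neg h] at hk
          simp only [Finset.mem_map, Function.Embedding.coeFn_mk]
          exact ⟨i, Finset.mem_erase.mpr ⟨h, by simp [hk]⟩, rfl⟩
      · exfalso
        simp only [Finset.mem_filter, Finset.mem_univ, true_and, hv', Sum.elim_inr, hvR] at hk
        have := hb j
        split at hk <;> omega
    have hle := Finset.card_le_card hsub
    rw [Finset.card_map, Finset.card_erase_of_mem hi₀mem] at hle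
    have hmem := Finset.card_pos.mpr ⟨i₀, hi₀mem⟩
    omega
  obtain ⟨l, u', c, hc, hu', hx'd⟩ := ih (ι ⊕ ι) v' x' hx'pos heq' hb' hcard'
  -- Step 4: pull the decomposition back
  set u : Fin l → ι → ℕ := fun t i => if i = i₀ then ∑ j ∈ N, u' t (Sum.inr j)
      else u' t (Sum.inl i) + (if v i < 0 then u' t (Sum.inr i) else 0) with hu
  refine ⟨l, u, c, hc, ?_, ?_⟩
  · -- the integer constraints
    intro t
    have hW : ∀ i : ι, v i * ((u t i : ℕ) : ℤ)
        = vL i * (u' t (Sum.inl i) : ℤ) + vR i * (u' t (Sum.inr i) : ℤ)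
          + (if i = i₀ then ((M : ℤ)+1) * ∑ j ∈ N, (u' t (Sum.inr j) : ℤ) else 0)
          + (if v i < 0 then -(((M : ℤ)+1) * (u' t (Sum.inr i) : ℤ)) else 0) := by
      intro i
      by_cases h : i = i₀
      · subst h
        rw [if_pos rfl, if_neg hvi₀pos]
        simp only [hu, if_pos rfl, hvL, if_pos rfl, hvR, if_neg hvi₀pos, hi₀]
        push_cast
        ring
      · rw [if_neg h]
        by_cases hvi : v i < 0
        · simp only [hu, if_neg h, if_pos hvi, hvL, if_neg h, hvR, if_pos hvi]
          push_cast
          ring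
        · simp only [hu, if_neg h, if_neg hvi, hvL, if_neg h, hvR, if_neg hvi]
          push_cast
          ring
    rw [Finset.sum_congr rfl (fun i _ => hW i)]
    rw [Finset.sum_add_distrib, Finset.sum_add_distrib, Finset.sum_add_distrib]
    have e1 : ∑ i, (vL i * (u' t (Sum.inl i) : ℤ) + vR i * (u' t (Sum.inr i) : ℤ)) = 0 := by
      rw [Finset.sum_add_distrib]
      have := hu' t
      rw [Fintype.sum_sum_type] at this
      simpa [hv'] using this
    have e2 : ∑ i, (if i = i₀ then ((M : ℤ)+1) * ∑ j ∈ N, (u' t (Sum.inr j) : ℤ) else 0)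
        = ((M : ℤ)+1) * ∑ j ∈ N, (u' t (Sum.inr j) : ℤ) := by
      rw [Finset.sum_ite_eq' Finset.univ i₀]
      simp
    have e3 : ∑ i, (if v i < 0 then -(((M : ℤ)+1) * (u' t (Sum.inr i) : ℤ)) else 0)
        = -(((M : ℤ)+1) * ∑ j ∈ N, (u' t (Sum.inr j) : ℤ)) := by
      rw [← Finset.sum_filter, ← hN, Finset.mul_sum, ← Finset.sum_neg_distrib]
    rw [Finset.sum_add_distrib] at e1
    rw [e1, e2, e3]
    ring
  · -- the decomposition of x
    intro i
    by_cases h : i = i₀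
    · subst h
      have hxd : ∀ j ∈ N, f j = ∑ t, u' t (Sum.inr j) • c t := fun j _ => by
        simpa [hx'] using hx'd (Sum.inr j)
      rw [hfsum, Finset.sum_congr rfl hxd, Finset.sum_comm]
      refine Finset.sum_congr rfl fun t _ => ?_
      simp only [hu, if_true]
      exact (Finset.sum_smul).symm
    · have hxi : x i = (x i - f i) + f i := by abel
      have h1 : x i - f i = ∑ t, u' t (Sum.inl i) • c t := hx'd (Sum.inl i)
      have h2f : f i = ∑ t, (if v i < 0 then u' t (Sum.inr i) else 0) • c t := by
        by_cases hvi : v i < 0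
        · simp only [if_pos hvi]
          exact hx'd (Sum.inr i)
        · simp only [if_neg hvi, zero_smul, Finset.sum_const_zero]
          exact hfzero i hvi
      rw [hxi, h1, h2f, ← Finset.sum_add_distrib]
      refine Finset.sum_congr rfl fun t _ => ?_
      rw [hu]
      simp only [if_neg h]
      by_cases hvi : v i < 0 <;> simp [hvi, add_smul]

end

section
variable {G : Type*} [AddCommGroup G] [PartialOrder G] [IsOrderedAddMonoid G]

lemma single_relation
    (h2 : ∀ (p : ℕ) (x : G), 1 ≤ p → 0 ≤ p • x → 0 ≤ x)
    (h3 : ∀ a₀ a₁ b₀ b₁ : G, a₀ ≤ b₀ → a₀ ≤ b₁ → a₁ ≤ b₀ → a₁ ≤ b₁ →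
      ∃ x : G, a₀ ≤ x ∧ a₁ ≤ x ∧ x ≤ b₀ ∧ x ≤ b₁) :
    ∀ (Mc cnt : ℕ) (ι : Type) [Fintype ι] [DecidableEq ι] (v : ι → ℤ) (x : ι → G),
      (∀ i, 0 ≤ x i) → (∑ i, v i • x i = 0) → (∀ i, (v i).natAbs ≤ Mc) →
      ((Finset.univ.filter fun i => (v i).natAbs = Mc).card ≤ cnt) → HasDecomp v x := by
  intro Mc
  induction Mc with
  | zero =>
    intro cnt ι _ _ v x hx heq hb _
    refine hasDecomp_zero hx fun i => ?_
    have := hb i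
    omega
  | succ M ihM =>
    intro cnt
    induction cnt with
    | zero =>
      intro ι _ _ v x hx heq hb hc
      refine ihM (Fintype.card ι) ι v x hx heq (fun i => ?_) ?_
      · have h1 := hb i
        have h2' : i ∉ Finset.univ.filter (fun i => (v i).natAbs = M + 1) := by
          rw [Finset.card_eq_zero.mp (Nat.le_zero.mp hc)]
          exact Finset.notMem_empty i
        simp only [Finset.mem_filter, Finset.mem_univ, true_and] at h2'
        omega
      · exact le_trans (Finset.card_filter_le _ _) (by simp)
    | succ cnt ihc =>
      intro ι _ _ v x hx heq hb hc
      by_cases hpos : ∃ i₀, v i₀ = ((M : ℤ) + 1)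
      · obtain ⟨i₀, hi₀⟩ := hpos
        exact reduction_step h2 h3 M cnt
          (fun ι' _ _ v' x' a b cc d => ihc ι' v' x' a b cc d) v x hx heq hb hc i₀ hi₀
      by_cases hneg2 : ∃ i₀, v i₀ = -((M : ℤ) + 1)
      · obtain ⟨i₀, hi₀⟩ := hneg2
        have heq2 : ∑ i, (-v i) • x i = 0 := by
          have hh : ∑ i, (-v i) • x i = - ∑ i, v i • x i := by
            rw [← Finset.sum_neg_distrib]
            exact Finset.sum_congr rfl fun i _ => neg_smul (v i) (x i)
          rw [hh, heq, neg_zero]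
        have hb2 : ∀ i, ((fun i => -v i) i).natAbs ≤ M + 1 := by
          intro i
          simp only [Int.natAbs_neg]
          exact hb i
        have hc2 : ((Finset.univ.filter fun i => ((fun i => -v i) i).natAbs = M + 1).card ≤ cnt + 1) := by
          have hfe : (Finset.univ.filter fun i => ((fun i => -v i) i).natAbs = M + 1)
              = (Finset.univ.filter fun i => (v i).natAbs = M + 1) := by
            apply Finset.filter_congr
            intro i _
            rw [Int.natAbs_neg]
          rw [hfe]
          exact hc
        have hD : HasDecomp (fun i => -v i) x :=
          reduction_step h2 h3 M cnt
            (fun ι' _ _ v' x' a b cc d => ihc ι' v' x' a b cc d) (fun i => -v i) x hx heq2 hb2 hc2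
            i₀ (by show -v i₀ = _; rw [hi₀]; ring)
        obtain ⟨l, u, c, hcc, huu, hxx⟩ := hD
        refine ⟨l, u, c, hcc, fun t => ?_, hxx⟩
        have h4 : ∑ i, (v i) * ((u t i : ℕ) : ℤ) = - ∑ i, (-v i) * ((u t i : ℕ) : ℤ) := by
          rw [← Finset.sum_neg_distrib]
          exact Finset.sum_congr rfl fun i _ => by ring
        rw [h4, huu t, neg_zero]
      · refine ihM (Fintype.card ι) ι v x hx heq (fun i => ?_)
          (le_trans (Finset.card_filter_le _ _) (by simp))
        have := hb i
        by_contra hcon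
        have habs : (v i).natAbs = M + 1 := by omega
        rcases Int.natAbs_eq_iff.mp habs with h' | h'
        · exact hpos ⟨i, by exact_mod_cast h'⟩
        · exact hneg2 ⟨i, by push_cast at h' ⊢; linarith⟩

lemma multi_relation
    (h2 : ∀ (p : ℕ) (x : G), 1 ≤ p → 0 ≤ p • x → 0 ≤ x)
    (h3 : ∀ a₀ a₁ b₀ b₁ : G, a₀ ≤ b₀ → a₀ ≤ b₁ → a₁ ≤ b₀ → a₁ ≤ b₁ →
      ∃ x : G, a₀ ≤ x ∧ a₁ ≤ x ∧ x ≤ b₀ ∧ x ≤ b₁) :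
    ∀ (n : ℕ) (ι : Type) [Fintype ι] [DecidableEq ι] (v : Fin n → ι → ℤ) (x : ι → G),
      (∀ i, 0 ≤ x i) → (∀ k, ∑ i, v k i • x i = 0) →
      ∃ (l : ℕ) (u : Fin l → ι → ℕ) (c : Fin l → G),
        (∀ t, 0 ≤ c t) ∧ (∀ t k, ∑ i, v k i * (u t i : ℤ) = 0) ∧
        (∀ i, x i = ∑ t, u t i • c t) := by
  intro n
  induction n with
  | zero =>
    intro ι _ _ v x hx _
    obtain ⟨l, u, c, hcc, _, hxx⟩ := hasDecomp_zero (v := fun _ : ι => (0 : ℤ)) hx fun _ => rfl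
    exact ⟨l, u, c, hcc, fun t k => Fin.elim0 k, hxx⟩
  | succ n ihn =>
    intro ι _ _ v x hx heq
    have h1 : HasDecomp (v 0) x := by
      refine single_relation h2 h3 (Finset.univ.sup fun i => (v 0 i).natAbs) (Fintype.card ι)
        ι (v 0) x hx (heq 0) (fun i => Finset.le_sup (f := fun i => (v 0 i).natAbs) (Finset.mem_univ i))
        (le_trans (Finset.card_filter_le _ _) (by simp))
    obtain ⟨l1, u1, c1, hc1, hu1, hx1⟩ := h1
    have hrel : ∀ k : Fin n, ∑ t, (∑ i, v k.succ i * (u1 t i : ℤ)) • c1 t = 0 := by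
      intro k
      calc ∑ t, (∑ i, v k.succ i * (u1 t i : ℤ)) • c1 t
          = ∑ t, ∑ i, (v k.succ i * (u1 t i : ℤ)) • c1 t :=
            Finset.sum_congr rfl fun t _ => Finset.sum_smul
        _ = ∑ i, ∑ t, (v k.succ i * (u1 t i : ℤ)) • c1 t := Finset.sum_comm
        _ = ∑ i, v k.succ i • x i := by
            refine Finset.sum_congr rfl fun i _ => ?_
            rw [hx1 i, Finset.smul_sum]
            refine Finset.sum_congr rfl fun t _ => ?_
            rw [mul_smul, natCast_zsmul]
        _ = 0 := heq k.succ
    obtain ⟨l2, u2, c2, hc2, hu2, hx2⟩ :=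
      ihn (Fin l1) (fun k t => ∑ i, v k.succ i * (u1 t i : ℤ)) c1 hc1 hrel
    refine ⟨l2, fun s i => ∑ t, u2 s t * u1 t i, c2, hc2, ?_, ?_⟩
    · intro s k
      induction k using Fin.cases with
      | zero =>
        have hcalc : ∑ i, v 0 i * ((∑ t, u2 s t * u1 t i : ℕ) : ℤ)
            = ∑ t, (u2 s t : ℤ) * (∑ i, v 0 i * (u1 t i : ℤ)) := by
          push_cast
          simp only [Finset.mul_sum, Finset.sum_mul]
          rw [Finset.sum_comm]
          exact Finset.sum_congr rfl fun t _ => Finset.sum_congr rfl fun i _ => by ring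
        rw [hcalc]
        refine Finset.sum_eq_zero fun t _ => ?_
        rw [hu1 t, mul_zero]
      | succ k =>
        have hcalc : ∑ i, v k.succ i * ((∑ t, u2 s t * u1 t i : ℕ) : ℤ)
            = ∑ t, (∑ i, v k.succ i * (u1 t i : ℤ)) * (u2 s t : ℤ) := by
          push_cast
          simp only [Finset.mul_sum, Finset.sum_mul]
          rw [Finset.sum_comm]
          exact Finset.sum_congr rfl fun t _ => Finset.sum_congr rfl fun i _ => by ring
        rw [hcalc]
        exact hu2 s k
    · intro i
      rw [hx1 i]
      calc ∑ t, u1 t i • c1 t = ∑ t, u1 t i • (∑ s, u2 s t • c2 s) :=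
            Finset.sum_congr rfl fun t _ => by rw [hx2 t]
        _ = ∑ t, ∑ s, (u1 t i * u2 s t) • c2 s := by
            refine Finset.sum_congr rfl fun t _ => ?_
            rw [Finset.smul_sum]
            refine Finset.sum_congr rfl fun s _ => (mul_smul _ _ _).symm
        _ = ∑ s, (∑ t, u2 s t * u1 t i) • c2 s := by
            rw [Finset.sum_comm]
            refine Finset.sum_congr rfl fun s _ => ?_
            rw [Finset.sum_smul]
            refine Finset.sum_congr rfl fun t _ => by rw [mul_comm]

end

section gordan

variable {k : ℕ}

private lemma sum_cast_sub (c : Fin k → ℤ) (w u : Fin k → ℕ) (h : ∀ i, u i ≤ w i) :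
    ∑ i, c i * ((w i - u i : ℕ) : ℤ) = ∑ i, c i * (w i : ℤ) - ∑ i, c i * (u i : ℤ) := by
  rw [← Finset.sum_sub_distrib]
  refine Finset.sum_congr rfl fun i _ => ?_
  rw [Nat.cast_sub (h i)]
  ring

private lemma pigeonhole (s : Finset (Fin k)) (g : Fin k → ℤ) (D : ℤ) (hD : 0 ≤ D)
    (h : (k : ℤ) * D < ∑ i ∈ s, g i) : ∃ j ∈ s, D < g j := by
  by_contra hcon
  push_neg at hcon
  have h1 : ∑ i ∈ s, g i ≤ s.card • D := Finset.sum_le_card_nsmul s g D hcon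
  have h2 : (s.card : ℤ) ≤ (k : ℤ) := by
    have := Finset.card_le_card (Finset.subset_univ s)
    simp only [Finset.card_univ, Fintype.card_fin] at this
    exact_mod_cast this
  have h3 : (s.card : ℤ) * D ≤ (k : ℤ) * D := mul_le_mul_of_nonneg_right h2 hD
  rw [nsmul_eq_mul] at h1
  linarith

private lemma pair_vec (c : Fin k → ℤ) (w : Fin k → ℕ) (B : ℕ) (i₁ j : Fin k) (hij : i₁ ≠ j)
    (a b : ℤ) (ha : 0 < a) (hb : 0 ≤ b) (hcc : c i₁ * a + c j * b = 0)
    (haw : a ≤ (w i₁ : ℤ)) (hbw : b ≤ (w j : ℤ)) (haB : a ≤ (B : ℤ)) (hbB : b ≤ (B : ℤ))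
    (hw : 0 ≤ ∑ i, c i * (w i : ℤ)) :
    ∃ u : Fin k → ℕ, (∀ i, u i ≤ B) ∧ (0 ≤ ∑ i, c i * (u i : ℤ)) ∧ (∃ i, 0 < u i) ∧
      (∀ i, u i ≤ w i) ∧ 0 ≤ ∑ i, c i * ((w i - u i : ℕ) : ℤ) := by
  classical
  set u : Fin k → ℕ := fun i => if i = i₁ then a.toNat else if i = j then b.toNat else 0 with hu
  have hui₁ : u i₁ = a.toNat := by simp [hu]
  have huj : u j = b.toNat := by simp [hu, Ne.symm hij]
  have huo : ∀ i, i ≠ i₁ → i ≠ j → u i = 0 := fun i h1 h2 => by simp [hu, h1, h2]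
  have husum : ∑ i, c i * (u i : ℤ) = 0 := by
    have h0 : ∀ i ∈ Finset.univ, i ∉ ({i₁, j} : Finset (Fin k)) → c i * ((u i : ℕ) : ℤ) = 0 := by
      intro i _ hi
      simp only [Finset.mem_insert, Finset.mem_singleton, not_or] at hi
      rw [huo i hi.1 hi.2]
      simp
    rw [← Finset.sum_subset (Finset.subset_univ _) h0, Finset.sum_pair hij, hui₁, huj,
      Int.toNat_of_nonneg ha.le, Int.toNat_of_nonneg hb]
    exact hcc
  have hle : ∀ i, u i ≤ w i := by
    intro i
    rcases eq_or_ne i i₁ with rfl | h1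
    · rw [hui₁]; omega
    rcases eq_or_ne i j with rfl | h2
    · rw [huj]; omega
    · rw [huo i h1 h2]; omega
  refine ⟨u, fun i => ?_, by rw [husum], ⟨i₁, by rw [hui₁]; omega⟩, hle, ?_⟩
  · rcases eq_or_ne i i₁ with rfl | h1
    · rw [hui₁]; omega
    rcases eq_or_ne i j with rfl | h2
    · rw [huj]; omega
    · rw [huo i h1 h2]; omega
  · rw [sum_cast_sub c w u hle, husum]
    omega

set_option maxHeartbeats 2000000 in
/-- Gordan lemma single -/
lemma gordan1 (c : Fin k → ℤ) :
    ∃ (l : ℕ) (F : Fin l → Fin k → ℕ),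
      (∀ t, 0 ≤ ∑ i, c i * (F t i : ℤ)) ∧
      ∀ w : Fin k → ℕ, 0 ≤ ∑ i, c i * (w i : ℤ) →
        ∃ a : Fin l → ℕ, ∀ i, w i = ∑ t, a t * F t i := by
  classical
  set C : ℤ := (Finset.univ.sup fun i => (c i).natAbs : ℕ) + 1 with hC
  have hC1 : 1 ≤ C := by rw [hC]; omega
  have hCabs : ∀ i, -C ≤ c i ∧ c i ≤ C := by
    intro i
    have h1 : (c i).natAbs ≤ (Finset.univ.sup fun i => (c i).natAbs) :=
      Finset.le_sup (f := fun i => (c i).natAbs) (Finset.mem_univ i)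
    constructor <;> · rw [hC]; omega
  set B : ℕ := k * (C.toNat * C.toNat) + C.toNat with hB
  have hBC : (B : ℤ) = (k : ℤ) * (C * C) + C := by
    rw [hB]
    push_cast
    rw [Int.toNat_of_nonneg (by omega)]
  have hB1 : 1 ≤ B := by
    have h1 : 1 ≤ C.toNat := by omega
    exact le_trans h1 (Nat.le_add_left _ _)
  have hCB : C ≤ (B : ℤ) := by
    have h0 : (0 : ℤ) ≤ (k : ℤ) * (C * C) := by positivity
    rw [hBC]
    linarith
  set 𝔽 : Finset (Fin k → ℕ) :=
    (Fintype.piFinset fun _ : Fin k => Finset.range (B + 1)).filter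
      (fun w => 0 ≤ ∑ i, c i * (w i : ℤ)) with h𝔽
  have hmem𝔽 : ∀ w : Fin k → ℕ, w ∈ 𝔽 ↔ ((∀ i, w i ≤ B) ∧ 0 ≤ ∑ i, c i * (w i : ℤ)) := by
    intro w
    rw [h𝔽, Finset.mem_filter, Fintype.mem_piFinset]
    simp only [Finset.mem_range]
    constructor
    · rintro ⟨hh1, hh2⟩; exact ⟨fun i => by have := hh1 i; omega, hh2⟩
    · rintro ⟨hh1, hh2⟩; exact ⟨fun i => by have := hh1 i; omega, hh2⟩
  set l := 𝔽.card with hl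
  set F : Fin l → Fin k → ℕ := fun t => (𝔽.equivFin.symm t : { x // x ∈ 𝔽 }).val with hF
  have hFmem : ∀ t, F t ∈ 𝔽 := fun t => (𝔽.equivFin.symm t).2
  refine ⟨l, F, fun t => ((hmem𝔽 (F t)).mp (hFmem t)).2, ?_⟩
  -- the splitting step
  have split : ∀ w : Fin k → ℕ, 0 ≤ ∑ i, c i * (w i : ℤ) → (¬ ∀ i, w i ≤ B) →
      ∃ u : Fin k → ℕ, u ∈ 𝔽 ∧ (∃ i, 0 < u i) ∧ (∀ i, u i ≤ w i) ∧
        0 ≤ ∑ i, c i * ((w i - u i : ℕ) : ℤ) := by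
    intro w hw hbig
    push_neg at hbig
    set cw := ∑ i, c i * (w i : ℤ) with hcw
    by_cases hI : ∃ i, 0 < w i ∧ 0 ≤ c i ∧ c i ≤ cw
    · obtain ⟨i, hwi, hci, hcicw⟩ := hI
      set u : Fin k → ℕ := fun i' => if i' = i then 1 else 0 with hu
      have hui : u i = 1 := by simp [hu]
      have huo : ∀ i', i' ≠ i → u i' = 0 := fun i' h => by simp [hu, h]
      have husum : ∑ i', c i' * ((u i' : ℕ) : ℤ) = c i := by
        rw [Finset.sum_eq_single i (fun b _ hb => by rw [huo b hb]; simp) (by simp)]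
        rw [hui]
        simp
      have hle : ∀ i', u i' ≤ w i' := by
        intro i'
        rcases eq_or_ne i' i with rfl | h
        · rw [hui]; omega
        · rw [huo i' h]; omega
      refine ⟨u, (hmem𝔽 u).mpr ⟨fun i' => ?_, by rw [husum]; exact hci⟩,
        ⟨i, by rw [hui]; omega⟩, hle, ?_⟩
      · rcases eq_or_ne i' i with rfl | h
        · rw [hui]; omega
        · rw [huo i' h]; omega
      · rw [sum_cast_sub c w u hle, husum]
        omega
    · push_neg at hI
      obtain ⟨i₁, hi₁⟩ := hbig
      have hwi₁ : 0 < w i₁ := by omega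
      have hwi₁B : (B : ℤ) < (w i₁ : ℤ) := by exact_mod_cast Nat.cast_lt.mpr hi₁
      rcases lt_trichotomy (c i₁) 0 with hc1 | hc1 | hc1
      · -- c i₁ < 0 : find j with c j > 0 and c j * w j > C²
        have hPsum : (k : ℤ) * (C * C) <
            ∑ i ∈ Finset.univ.filter (fun i => 0 ≤ c i), c i * (w i : ℤ) := by
          have hsplit := Finset.sum_filter_add_sum_filter_not Finset.univ
            (fun i => 0 ≤ c i) (fun i => c i * (w i : ℤ))
          have hterm : (fun i => (-(c i)) * (w i : ℤ)) i₁ ≤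
              ∑ i ∈ Finset.univ.filter (fun i => ¬ 0 ≤ c i), (-(c i)) * (w i : ℤ) := by
            refine Finset.single_le_sum (f := fun i => (-(c i)) * (w i : ℤ)) (fun i hi => ?_) ?_
            · have h7 := (Finset.mem_filter.mp hi).2
              have h8 : (0:ℤ) ≤ -(c i) := by omega
              positivity
            · simp only [Finset.mem_filter, Finset.mem_univ, true_and]
              omega
          simp only at hterm
          have hneg : ∑ i ∈ Finset.univ.filter (fun i => ¬ 0 ≤ c i), c i * (w i : ℤ)
              = - ∑ i ∈ Finset.univ.filter (fun i => ¬ 0 ≤ c i), (-(c i)) * (w i : ℤ) := by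
            rw [← Finset.sum_neg_distrib]
            exact Finset.sum_congr rfl fun i _ => by ring
          have h1 : (w i₁ : ℤ) ≤ (-(c i₁)) * (w i₁ : ℤ) := by nlinarith
          rw [hneg] at hsplit
          rw [hBC] at hwi₁B
          nlinarith
        obtain ⟨j, hjmem, hjgt⟩ := pigeonhole _ _ (C * C) (by positivity) hPsum
        have hcj : 0 ≤ c j := (Finset.mem_filter.mp hjmem).2
        have hcjpos : 0 < c j := by nlinarith
        have hcjC : c j ≤ C := (hCabs j).2
        have hwjC : C < (w j : ℤ) := by nlinarith
        have hij : i₁ ≠ j := fun h => by rw [h] at hc1; omega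
        obtain ⟨u, hu1, hu2, hu3, hu4, hu5⟩ := pair_vec c w B i₁ j hij (c j) (-(c i₁))
          hcjpos (by omega) (by ring)
          (by linarith) (by have := (hCabs i₁).1; linarith) (by linarith) (by have := (hCabs i₁).1; linarith) hw
        exact ⟨u, (hmem𝔽 u).mpr ⟨hu1, hu2⟩, hu3, hu4, hu5⟩
      · exact absurd hw (by have := hI i₁ hwi₁ (le_of_eq hc1.symm); omega)
      · -- c i₁ > 0 : find j with c j < 0 and (−c j) * w j > C²
        have hcwlt : cw < c i₁ := hI i₁ hwi₁ (le_of_lt hc1)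
        have hNsum : (k : ℤ) * (C * C) <
            ∑ i ∈ Finset.univ.filter (fun i => ¬ 0 ≤ c i), (-(c i)) * (w i : ℤ) := by
          have hsplit := Finset.sum_filter_add_sum_filter_not Finset.univ
            (fun i => 0 ≤ c i) (fun i => c i * (w i : ℤ))
          have hterm : (fun i => c i * (w i : ℤ)) i₁ ≤
              ∑ i ∈ Finset.univ.filter (fun i => 0 ≤ c i), c i * (w i : ℤ) := by
            refine Finset.single_le_sum (f := fun i => c i * (w i : ℤ)) (fun i hi => ?_) ?_
            · have h7 := (Finset.mem_filter.mp hi).2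
              positivity
            · simp only [Finset.mem_filter, Finset.mem_univ, true_and]
              omega
          simp only at hterm
          have hneg : ∑ i ∈ Finset.univ.filter (fun i => ¬ 0 ≤ c i), c i * (w i : ℤ)
              = - ∑ i ∈ Finset.univ.filter (fun i => ¬ 0 ≤ c i), (-(c i)) * (w i : ℤ) := by
            rw [← Finset.sum_neg_distrib]
            exact Finset.sum_congr rfl fun i _ => by ring
          have h1 : (w i₁ : ℤ) ≤ c i₁ * (w i₁ : ℤ) := by nlinarith
          have h2 : c i₁ ≤ C := (hCabs i₁).2
          rw [hneg] at hsplit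
          rw [hBC] at hwi₁B
          nlinarith
        obtain ⟨j, hjmem, hjgt⟩ := pigeonhole _ _ (C * C) (by positivity) hNsum
        have hcj : ¬ 0 ≤ c j := (Finset.mem_filter.mp hjmem).2
        have hcjC : -C ≤ c j := (hCabs j).1
        have hwjC : C < (w j : ℤ) := by nlinarith
        have hij : i₁ ≠ j := fun h => by rw [h] at hc1; omega
        obtain ⟨u, hu1, hu2, hu3, hu4, hu5⟩ := pair_vec c w B i₁ j hij (-(c j)) (c i₁)
          (by omega) (by omega) (by ring)
          (by linarith) (by have := (hCabs i₁).2; linarith) (by linarith)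
          (by have := (hCabs i₁).2; linarith) hw
        exact ⟨u, (hmem𝔽 u).mpr ⟨hu1, hu2⟩, hu3, hu4, hu5⟩
  -- main induction on the total size of w
  have main : ∀ (S : ℕ) (w : Fin k → ℕ), (∑ i, w i ≤ S) → 0 ≤ ∑ i, c i * (w i : ℤ) →
      ∃ a : Fin l → ℕ, ∀ i, w i = ∑ t, a t * F t i := by
    intro S
    induction S with
    | zero =>
      intro w hS _
      refine ⟨0, fun i => ?_⟩
      have hwi : w i = 0 := by
        have h9 := Finset.single_le_sum (f := fun i => w i) (fun i _ => Nat.zero_le _)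
          (Finset.mem_univ i)
        omega
      simp [hwi]
    | succ S ihS =>
      intro w hS hw
      by_cases hAll : ∀ i, w i ≤ B
      · have hmem : w ∈ 𝔽 := (hmem𝔽 w).mpr ⟨hAll, hw⟩
        set tw := 𝔽.equivFin ⟨w, hmem⟩ with htw
        have hFtw : F tw = w := by
          simp only [hF, htw, Equiv.symm_apply_apply]
        refine ⟨fun t => if t = tw then 1 else 0, fun i => ?_⟩
        rw [Finset.sum_eq_single tw (fun b _ hb => by simp [hb]) (by simp)]
        simp [hFtw]
      · obtain ⟨u, hu𝔽, ⟨iu, hiu⟩, hule, husol⟩ := split w hw hAll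
        have hlt : ∑ i, (w i - u i) ≤ S := by
          have h1 : ∑ i, (w i - u i) + ∑ i, u i = ∑ i, w i := by
            rw [← Finset.sum_add_distrib]
            exact Finset.sum_congr rfl fun i _ => by have := hule i; omega
          have h2 : 1 ≤ ∑ i, u i :=
            le_trans hiu (Finset.single_le_sum (f := fun i => u i)
              (fun i _ => Nat.zero_le _) (Finset.mem_univ iu))
          omega
        obtain ⟨a', ha'⟩ := ihS (fun i => w i - u i) hlt husol
        set tu := 𝔽.equivFin ⟨u, hu𝔽⟩ with htu
        have hFtu : F tu = u := by
          simp only [hF, htu, Equiv.symm_apply_apply]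
        refine ⟨fun t => a' t + (if t = tu then 1 else 0), fun i => ?_⟩
        have hsum : ∑ t, (a' t + (if t = tu then 1 else 0)) * F t i
            = ∑ t, a' t * F t i + ∑ t, (if t = tu then 1 else 0) * F t i := by
          rw [← Finset.sum_add_distrib]
          exact Finset.sum_congr rfl fun t _ => by ring
        have hite : ∑ t, (if t = tu then 1 else 0) * F t i = u i := by
          rw [Finset.sum_eq_single tu (fun b _ hb => by simp [hb]) (by simp)]
          simp [hFtu]
        rw [hsum, hite]
        have := ha' i
        have := hule i
        omega
  intro w hw
  exact main (∑ i, w i) w (le_refl _) hw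

end gordan

section gordanfull

/-- Gordan's lemma for finitely many integer inequalities over ℕ. -/
lemma gordan_full (m : ℕ) : ∀ (n : ℕ) (M : Fin m → Fin n → ℤ),
    ∃ (l : ℕ) (F : Fin l → Fin m → ℕ),
      (∀ t j, 0 ≤ ∑ i, M i j * (F t i : ℤ)) ∧
      ∀ w : Fin m → ℕ, (∀ j, 0 ≤ ∑ i, M i j * (w i : ℤ)) →
        ∃ a : Fin l → ℕ, ∀ i, w i = ∑ t, a t * F t i := by
  intro n
  induction n with
  | zero =>
    intro M
    refine ⟨m, fun t i => if i = t then 1 else 0, fun t j => Fin.elim0 j, fun w _ => ⟨w, fun i => ?_⟩⟩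
    rw [Finset.sum_eq_single i (fun b _ hb => by simp [Ne.symm hb]) (by simp)]
    simp
  | succ n ihn =>
    intro M
    obtain ⟨l', F', hF'pos, hF'gen⟩ := ihn (fun i j => M i j.castSucc)
    obtain ⟨l'', W, hWpos, hWgen⟩ := gordan1 (fun t => ∑ i, M i (Fin.last n) * (F' t i : ℤ))
    refine ⟨l'', fun s i => ∑ t, W s t * F' t i, ?_, ?_⟩
    · intro s j
      have hcast : ∀ i, ((∑ t, W s t * F' t i : ℕ) : ℤ) = ∑ t, (W s t : ℤ) * (F' t i : ℤ) := by
        intro i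
        push_cast
        rfl
      induction j using Fin.lastCases with
      | last =>
        have hswap : ∑ i, M i (Fin.last n) * ((∑ t, W s t * F' t i : ℕ) : ℤ)
            = ∑ t, (∑ i, M i (Fin.last n) * (F' t i : ℤ)) * (W s t : ℤ) := by
          simp only [hcast]
          simp only [Finset.mul_sum, Finset.sum_mul]
          rw [Finset.sum_comm]
          exact Finset.sum_congr rfl fun t _ => Finset.sum_congr rfl fun i _ => by ring
        rw [hswap]
        have := hWpos s
        calc (0:ℤ) ≤ ∑ t, (fun t => ∑ i, M i (Fin.last n) * (F' t i : ℤ)) t * (W s t : ℤ) := by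
              simpa using this
          _ = ∑ t, (∑ i, M i (Fin.last n) * (F' t i : ℤ)) * (W s t : ℤ) := by simp
      | cast j =>
        have hswap : ∑ i, M i j.castSucc * ((∑ t, W s t * F' t i : ℕ) : ℤ)
            = ∑ t, (W s t : ℤ) * (∑ i, M i j.castSucc * (F' t i : ℤ)) := by
          simp only [hcast]
          simp only [Finset.mul_sum, Finset.sum_mul]
          rw [Finset.sum_comm]
          exact Finset.sum_congr rfl fun t _ => Finset.sum_congr rfl fun i _ => by ring
        rw [hswap]
        refine Finset.sum_nonneg fun t _ => mul_nonneg (by positivity) (hF'pos t j)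
    · intro w hw
      obtain ⟨a', ha'⟩ := hF'gen w (fun j => hw j.castSucc)
      have hlast : 0 ≤ ∑ t, (∑ i, M i (Fin.last n) * (F' t i : ℤ)) * ((a' t : ℕ) : ℤ) := by
        have hswap : ∑ t, (∑ i, M i (Fin.last n) * (F' t i : ℤ)) * ((a' t : ℕ) : ℤ)
            = ∑ i, M i (Fin.last n) * ((w i : ℕ) : ℤ) := by
          simp only [Finset.mul_sum, Finset.sum_mul]
          rw [Finset.sum_comm]
          refine Finset.sum_congr rfl fun i _ => ?_
          have : ((w i : ℕ) : ℤ) = ∑ t, (a' t : ℤ) * (F' t i : ℤ) := by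
            rw [ha' i]
            push_cast
            rfl
          rw [this, Finset.mul_sum]
          exact Finset.sum_congr rfl fun t _ => by ring
        rw [hswap]
        exact hw (Fin.last n)
      obtain ⟨b, hb⟩ := hWgen a' hlast
      refine ⟨b, fun i => ?_⟩
      rw [ha' i]
      have : ∀ t, a' t * F' t i = ∑ s, (b s * W s t) * F' t i := by
        intro t
        rw [← Finset.sum_mul, ← hb t]
      rw [Finset.sum_congr rfl fun t _ => this t, Finset.sum_comm]
      refine Finset.sum_congr rfl fun s _ => ?_
      rw [Finset.mul_sum]
      exact Finset.sum_congr rfl fun t _ => by ring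

end gordanfull

set_option maxHeartbeats 1000000 in
/-- Proposition 3.15-style, after Grillet, Effros, Handelman, and Shen.
Let `m, n ≥ 1` and let `M` be an `m × n` matrix with integer entries.  Then there exist
`k ≥ 1` and a `k × m` integer matrix `S` such that, for every partially ordered abelian group
`G` (the order being translation-invariant) which is unperforated and satisfies the
interpolation property, the solution set `{X ∈ M_{1,m}(G⁺) | XM ≥ 0}` is exactly
`{YS | Y ∈ M_{1,k}(G⁺)}`, products being computed with the `ℤ`-module structure of `G` and
matrix inequalities entrywise. -/
theorem exists_universal_generators_int
    (m n : ℕ) (hm : 1 ≤ m) (hn : 1 ≤ n) (M : Matrix (Fin m) (Fin n) ℤ) :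
    ∃ (k : ℕ), 1 ≤ k ∧ ∃ S : Matrix (Fin k) (Fin m) ℤ,
      ∀ (G : Type*) [AddCommGroup G] [PartialOrder G],
        (∀ a b : G, a ≤ b → ∀ c : G, a + c ≤ b + c) →
        (∀ (p : ℕ) (x : G), 1 ≤ p → 0 ≤ p • x → 0 ≤ x) →
        (∀ a₀ a₁ b₀ b₁ : G, a₀ ≤ b₀ → a₀ ≤ b₁ → a₁ ≤ b₀ → a₁ ≤ b₁ →
          ∃ x : G, a₀ ≤ x ∧ a₁ ≤ x ∧ x ≤ b₀ ∧ x ≤ b₁) →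
        {X : Fin m → G | (∀ i, 0 ≤ X i) ∧ ∀ j, 0 ≤ ∑ i, M i j • X i}
          = {X : Fin m → G | ∃ Y : Fin k → G, (∀ i, 0 ≤ Y i) ∧
              X = fun j => ∑ i, S i j • Y i} := by
  obtain ⟨l, F, hFpos, hFgen⟩ := gordan_full m n (fun i j => M i j)
  refine ⟨l + 1, by omega,
    Matrix.of (Fin.cons (fun _ => (0 : ℤ)) (fun t i => (F t i : ℤ))), ?_⟩
  intro G instG instP h1 h2 h3
  haveI instOG : IsOrderedAddMonoid G :=
    { add_le_add_left := fun a b hab c => h1 a b hab c }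
  have hS0 : ∀ i : Fin m,
      (Matrix.of (Fin.cons (fun _ => (0:ℤ)) (fun t i => (F t i : ℤ)))) 0 i = 0 := fun i => rfl
  have hSsucc : ∀ (s : Fin l) (i : Fin m),
      (Matrix.of (Fin.cons (fun _ => (0:ℤ)) (fun t i => (F t i : ℤ)))) s.succ i = (F s i : ℤ) :=
    fun s i => by simp [Fin.cons_succ]
  ext X
  simp only [Set.mem_setOf_eq]
  constructor
  · rintro ⟨hXpos, hXM⟩
    obtain ⟨L, u, c, hc, hu, hxd⟩ := multi_relation (G := G) h2 h3 n (Fin m ⊕ Fin n)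
      (fun j => Sum.elim (fun i => M i j) (fun j' => if j' = j then -1 else 0))
      (Sum.elim X (fun j => ∑ i, M i j • X i))
      (by
        rintro (i | j)
        · exact hXpos i
        · exact hXM j)
      (by
        intro j
        rw [Fintype.sum_sum_type]
        simp only [Sum.elim_inl, Sum.elim_inr]
        have h5 : ∑ j', (if j' = j then (-1:ℤ) else 0) • (∑ i, M i j' • X i)
            = -(∑ i, M i j • X i) := by
          rw [Finset.sum_eq_single j (fun b _ hb => by simp [hb]) (by simp)]
          simp
        rw [h5]
        exact add_neg_cancel _)
    -- each generator row of u solves the integer system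
    have hwt : ∀ t (j : Fin n), 0 ≤ ∑ i, M i j * ((u t (Sum.inl i) : ℕ) : ℤ) := by
      intro t j
      have h6 := hu t j
      rw [Fintype.sum_sum_type] at h6
      simp only [Sum.elim_inl, Sum.elim_inr] at h6
      have h7 : ∑ j', (if j' = j then (-1:ℤ) else 0) * ((u t (Sum.inr j') : ℕ) : ℤ)
          = -((u t (Sum.inr j) : ℕ) : ℤ) := by
        rw [Finset.sum_eq_single j (fun b _ hb => by simp [hb]) (by simp)]
        simp
      rw [h7] at h6
      have h8 : ∑ i, M i j * ((u t (Sum.inl i) : ℕ) : ℤ) = ((u t (Sum.inr j) : ℕ) : ℤ) := by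
        linarith
      rw [h8]
      positivity
    choose a ha using fun t => hFgen (fun i => u t (Sum.inl i)) (hwt t)
    refine ⟨Fin.cons 0 (fun s => ∑ t, a t s • c t), ?_, ?_⟩
    · intro t
      induction t using Fin.cases with
      | zero => simp
      | succ s =>
        simp only [Fin.cons_succ]
        exact Finset.sum_nonneg fun t _ => nsmul_nonneg (hc t) _
    · funext i
      have hXi : X i = ∑ t, u t (Sum.inl i) • c t := hxd (Sum.inl i)
      rw [Fin.sum_univ_succ]
      simp only [hS0, zero_smul, zero_add, hSsucc, Fin.cons_succ, Fin.cons_zero]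
      have hstep : ∀ s : Fin l, (F s i : ℤ) • (∑ t, a t s • c t)
          = ∑ t, (a t s * F s i) • c t := by
        intro s
        rw [natCast_zsmul, Finset.smul_sum]
        exact Finset.sum_congr rfl fun t _ => by rw [← mul_smul, mul_comm]
      rw [Finset.sum_congr rfl fun s _ => hstep s, Finset.sum_comm]
      rw [hXi]
      refine Finset.sum_congr rfl fun t _ => ?_
      rw [← Finset.sum_smul, ← ha t i]
  · rintro ⟨Y, hY, rfl⟩
    have hSpos : ∀ (t : Fin (l+1)) (i : Fin m),
        0 ≤ (Matrix.of (Fin.cons (fun _ => (0:ℤ)) (fun t i => (F t i : ℤ)))) t i := by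
      intro t i
      induction t using Fin.cases with
      | zero => rw [hS0]
      | succ s => rw [hSsucc]; positivity
    constructor
    · intro i
      exact Finset.sum_nonneg fun t _ => zsmul_nonneg (hY t) (hSpos t i)
    · intro j
      have hswap : ∑ i, M i j • (∑ t : Fin (l+1),
            (Matrix.of (Fin.cons (fun _ => (0:ℤ)) (fun t i => (F t i : ℤ)))) t i • Y t)
          = ∑ t : Fin (l+1), (∑ i, M i j *
            (Matrix.of (Fin.cons (fun _ => (0:ℤ)) (fun t i => (F t i : ℤ)))) t i) • Y t := by
        calc ∑ i, M i j • (∑ t : Fin (l+1),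
              (Matrix.of (Fin.cons (fun _ => (0:ℤ)) (fun t i => (F t i : ℤ)))) t i • Y t)
            = ∑ i, ∑ t : Fin (l+1), (M i j *
              (Matrix.of (Fin.cons (fun _ => (0:ℤ)) (fun t i => (F t i : ℤ)))) t i) • Y t := by
              refine Finset.sum_congr rfl fun i _ => ?_
              rw [Finset.smul_sum]
              exact Finset.sum_congr rfl fun t _ => (mul_smul _ _ _).symm
          _ = ∑ t : Fin (l+1), ∑ i, (M i j *
              (Matrix.of (Fin.cons (fun _ => (0:ℤ)) (fun t i => (F t i : ℤ)))) t i) • Y t :=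
              Finset.sum_comm
          _ = _ := Finset.sum_congr rfl fun t _ => (Finset.sum_smul).symm
      rw [hswap]
      refine Finset.sum_nonneg fun t _ => ?_
      refine zsmul_nonneg (hY t) ?_
      induction t using Fin.cases with
      | zero => simp [hS0]
      | succ s =>
        have : ∑ i, M i j * (Matrix.of (Fin.cons (fun _ => (0:ℤ)) (fun t i => (F t i : ℤ)))) s.succ i
            = ∑ i, M i j * (F s i : ℤ) :=
          Finset.sum_congr rfl fun i _ => by rw [hSsucc]
        rw [this]
        exact hFpos s j
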